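/- For every zero-monotone game v, the core of v equals the intersection over all nonempty coalitions B ⊆ N of the cores C(v^B), where v^B = v(B)·u_B + (v(N) - v(B))·u_N. -/

import Mathlib

open Finset

def coreGame {N : Type*} [Fintype N] [DecidableEq N] (v : Finset N → ℝ) : Set (N → ℝ) :=
  {x | ∑ i, x i = v univ ∧ ∀ A : Finset N, v A ≤ ∑ i ∈ A, x i}

def unanimity {N : Type*} [DecidableEq N] (A B : Finset N) : ℝ := if A ⊆ B then 1 else 0

def gameB {N : Type*} [Fintype N] [DecidableEq N] (v : Finset N → ℝ) (B A : Finset N) : ℝ :=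
  v B * unanimity B A + (v univ - v B) * unanimity univ A

theorem stmt9 {N : Type*} [Fintype N] [DecidableEq N]
    (v : Finset N → ℝ) (hv : v ∅ = 0)
    (hzn : ∀ i : N, v {i} = 0)
    (hmono : ∀ A B : Finset N, A ⊆ B → v A ≤ v B) :
    coreGame v = ⋂ B ∈ {B : Finset N | B.Nonempty}, coreGame (gameB v B) := by
  ext x
  simp only [coreGame, Set.mem_iInter, Set.mem_setOf_eq]
  constructor
  · rintro ⟨hsum, hA⟩ B hB
    have hx0 : ∀ A : Finset N, (0:ℝ) ≤ ∑ i ∈ A, x i := by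
      intro A
      refine Finset.sum_nonneg fun i _ => ?_
      have := hA {i}
      simpa [hzn i] using this
    have hBu : B ⊆ univ := Finset.subset_univ B
    refine ⟨by simp [gameB, unanimity, hBu, hsum], ?_⟩
    intro A
    unfold gameB unanimity
    by_cases hAu : (univ : Finset N) ⊆ A
    · have hA' : A = univ := univ_subset_iff.mp hAu
      subst hA'
      simp [hBu, hsum]
    · simp only [if_neg hAu, mul_zero, add_zero]
      by_cases hBA : B ⊆ A
      · rw [if_pos hBA, mul_one]
        exact (hmono _ _ hBA).trans (hA A)
      · rw [if_neg hBA, mul_zero]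
        exact hx0 A
  · intro h
    have hsum : ∑ i, x i = v univ := by
      by_cases hN : (univ : Finset N).Nonempty
      · have := (h univ hN).1; simpa [gameB, unanimity] using this
      · rw [Finset.not_nonempty_iff_eq_empty] at hN
        rw [hN, hv, Finset.sum_eq_zero]
        intro i _
        exact absurd (Finset.mem_univ i) (by simp [hN])
    refine ⟨hsum, ?_⟩
    intro A
    rcases A.eq_empty_or_nonempty with rfl | hAne
    · simp [hv]
    · have hcore := (h A hAne).2 A
      unfold gameB unanimity at hcore
      by_cases hAu : A = univ
      · subst hAu; exact hsum.ge
      · have hnu : ¬ (univ : Finset N) ⊆ A :=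
          fun hs => hAu (univ_subset_iff.mp hs)
        simpa [hnu] using hcore
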